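/- Let γ be real, s(x) = ∫₀ˣ e^{−γu} du, m′(y) = e^{γy}/(y(1−y)) for 0 < y < 1, and g(x,y) = (s(1) − s(max(x,y)))·s(min(x,y))/s(1). Let (α_n)_{n≥1} be measurable functions [0,1] → ℝ and (λ_n)_{n≥1} positive reals such that, for every n, ∫₀¹ α_n(y)²·m′(y) dy = 1 and α_n(x) = λ_n·∫₀¹ g(x,y)·α_n(y)·m′(y) dy for all x ∈ [0,1], and such that Σ_{n=1}^{∞} 1/λ_n² < ∞. Then for every a > 0 the series p(t,x,y) = Σ_{n=1}^{∞} e^{−λ_n t}·α_n(x)·α_n(y) converges absolutely and uniformly on the set {(t,x,y) : t ≥ a, 0 ≤ x ≤ 1, 0 ≤ y ≤ 1}. -/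

import Mathlib

open MeasureTheory

/-- The scale function `s(x) = ∫₀ˣ e^{−γu} du`. -/
noncomputable def sFn (γ x : ℝ) : ℝ := ∫ u in (0 : ℝ)..x, Real.exp (-(γ * u))

/-- The speed density `m′(y) = e^{γy}/(y(1−y))`. -/
noncomputable def mDens (γ y : ℝ) : ℝ := Real.exp (γ * y) / (y * (1 - y))

/-- The Green function `g(x,y) = (s(1) − s(max x y)) s(min x y)/s(1)`. -/
noncomputable def gFn (γ x y : ℝ) : ℝ :=
  (sFn γ 1 - sFn γ (max x y)) * sFn γ (min x y) / sFn γ 1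

namespace TDAux

lemma exp_cont (γ : ℝ) : Continuous fun u : ℝ => Real.exp (-(γ * u)) :=
  Real.continuous_exp.comp ((continuous_const.mul continuous_id).neg)

lemma exp_ii (γ a b : ℝ) : IntervalIntegrable (fun u => Real.exp (-(γ * u))) volume a b :=
  (exp_cont γ).intervalIntegrable a b

lemma sFn_cont (γ : ℝ) : Continuous (sFn γ) :=
  intervalIntegral.continuous_primitive (fun a b => exp_ii γ a b) 0

lemma sFn_sub (γ x y : ℝ) :
    sFn γ y - sFn γ x = ∫ u in x..y, Real.exp (-(γ * u)) := by
  have := intervalIntegral.integral_add_adjacent_intervals (exp_ii γ 0 x) (exp_ii γ x y)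
  simp only [sFn]; linarith

lemma sFn_mono (γ : ℝ) {x y : ℝ} (h : x ≤ y) : sFn γ x ≤ sFn γ y := by
  have h0 : 0 ≤ sFn γ y - sFn γ x := by
    rw [sFn_sub]
    exact intervalIntegral.integral_nonneg h (fun u _ => (Real.exp_pos _).le)
  linarith

lemma sFn_zero (γ : ℝ) : sFn γ 0 = 0 := intervalIntegral.integral_same

lemma sFn_nonneg (γ : ℝ) {x : ℝ} (h : 0 ≤ x) : 0 ≤ sFn γ x := by
  simpa [sFn_zero] using sFn_mono γ h

lemma sFn_diff_le (γ : ℝ) {x y : ℝ} (h0 : 0 ≤ x) (hxy : x ≤ y) (h1 : y ≤ 1) :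
    sFn γ y - sFn γ x ≤ Real.exp |γ| * (y - x) := by
  rw [sFn_sub]
  calc (∫ u in x..y, Real.exp (-(γ * u)))
      ≤ ∫ _u in x..y, Real.exp |γ| := by
        apply intervalIntegral.integral_mono_on hxy (exp_ii γ x y)
          intervalIntegrable_const
        intro u hu
        apply Real.exp_le_exp.2
        have h1u : |u| ≤ 1 := abs_le.2 ⟨by linarith [hu.1], by linarith [hu.2]⟩
        calc -(γ * u) ≤ |γ * u| := neg_le_abs _
          _ = |γ| * |u| := abs_mul _ _
          _ ≤ |γ| * 1 := by gcongr
          _ = |γ| := mul_one _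
    _ = Real.exp |γ| * (y - x) := by simp [mul_comm]

lemma sFn_one_pos (γ : ℝ) : 0 < sFn γ 1 := by
  have : Real.exp (-|γ|) * (1 - 0) ≤ sFn γ 1 - sFn γ 0 := by
    rw [sFn_sub]
    calc Real.exp (-|γ|) * (1 - 0) = ∫ _u in (0:ℝ)..1, Real.exp (-|γ|) := by
          simp [mul_comm]
      _ ≤ ∫ u in (0:ℝ)..1, Real.exp (-(γ * u)) := by
          apply intervalIntegral.integral_mono_on zero_le_one intervalIntegrable_const
            (exp_ii γ 0 1)
          intro u hu
          apply Real.exp_le_exp.2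
          have h1u : |u| ≤ 1 := abs_le.2 ⟨by linarith [hu.1], hu.2⟩
          have : |γ * u| ≤ |γ| := by
            rw [abs_mul]
            calc |γ| * |u| ≤ |γ| * 1 := by gcongr
              _ = |γ| := mul_one _
          linarith [(abs_le.1 this).2]
  have := Real.exp_pos (-|γ|)
  simp [sFn_zero] at *
  linarith

end TDAux


namespace TDAux2
open TDAux

noncomputable def Bconst (γ : ℝ) : ℝ :=
  (Real.exp |γ| * Real.exp |γ| / sFn γ 1) ^ 2 * Real.exp |γ|

lemma Bconst_nonneg (γ : ℝ) : 0 ≤ Bconst γ :=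
  mul_nonneg (sq_nonneg _) (Real.exp_pos _).le

lemma g_nonneg (γ : ℝ) {x y : ℝ} (hx : x ∈ Set.Icc (0:ℝ) 1) (hy : y ∈ Set.Icc (0:ℝ) 1) :
    0 ≤ gFn γ x y := by
  apply div_nonneg _ (sFn_one_pos γ).le
  apply mul_nonneg
  · have : max x y ≤ 1 := max_le hx.2 hy.2
    linarith [sFn_mono γ this]
  · exact sFn_nonneg γ (le_min hx.1 hy.1)

lemma g_le (γ : ℝ) {x y : ℝ} (hx : x ∈ Set.Icc (0:ℝ) 1) (hy : y ∈ Set.Icc (0:ℝ) 1) :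
    gFn γ x y ≤ (Real.exp |γ| * Real.exp |γ| / sFn γ 1) * (y * (1 - y)) := by
  have hs1 := sFn_one_pos γ
  have hA : sFn γ 1 - sFn γ (max x y) ≤ Real.exp |γ| * (1 - y) := by
    have h := sFn_diff_le γ hy.1 hy.2 le_rfl
    have := sFn_mono γ (le_max_right x y)
    linarith
  have hB : sFn γ (min x y) ≤ Real.exp |γ| * y := by
    have h := sFn_diff_le γ le_rfl hy.1 hy.2
    have := sFn_mono γ (min_le_right x y)
    have h0 := sFn_zero γ
    linarith
  have hnnA : 0 ≤ sFn γ 1 - sFn γ (max x y) := by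
    linarith [sFn_mono γ (max_le hx.2 hy.2)]
  have hnnB : 0 ≤ sFn γ (min x y) := sFn_nonneg γ (le_min hx.1 hy.1)
  have hy0 := hy.1
  have hy1 := hy.2
  have hEY : (0:ℝ) ≤ Real.exp |γ| * (1 - y) := mul_nonneg (Real.exp_pos _).le (by linarith)
  calc gFn γ x y = (sFn γ 1 - sFn γ (max x y)) * sFn γ (min x y) / sFn γ 1 := rfl
    _ ≤ (Real.exp |γ| * (1 - y)) * (Real.exp |γ| * y) / sFn γ 1 :=
        (div_le_div_iff_of_pos_right hs1).2 (mul_le_mul hA hB hnnB hEY)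
    _ = (Real.exp |γ| * Real.exp |γ| / sFn γ 1) * (y * (1 - y)) := by ring

lemma mDens_nonneg (γ : ℝ) {y : ℝ} (hy : y ∈ Set.Ioc (0:ℝ) 1) : 0 ≤ mDens γ y := by
  apply div_nonneg (Real.exp_pos _).le
  have h1 : 0 < y := hy.1
  have h2 : y ≤ 1 := hy.2
  nlinarith

lemma g_sq_m_le (γ : ℝ) {x y : ℝ} (hx : x ∈ Set.Icc (0:ℝ) 1) (hy : y ∈ Set.Ioc (0:ℝ) 1) :
    gFn γ x y ^ 2 * mDens γ y ≤ Bconst γ := by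
  have hs1 := sFn_one_pos γ
  set K : ℝ := Real.exp |γ| * Real.exp |γ| / sFn γ 1 with hKdef
  have hK : 0 ≤ K := div_nonneg (mul_nonneg (Real.exp_pos _).le (Real.exp_pos _).le) hs1.le
  rcases hy.2.lt_or_eq with h1 | h1
  case inr =>
    subst h1
    have hm0 : mDens γ 1 = 0 := by simp [mDens]
    rw [hm0, mul_zero]
    exact Bconst_nonneg γ
  · have hd : 0 < y * (1 - y) := mul_pos hy.1 (by linarith)
    have hyI : y ∈ Set.Icc (0:ℝ) 1 := ⟨hy.1.le, hy.2⟩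
    have hgle := g_le γ hx hyI
    have hg0 := g_nonneg γ hx hyI
    have hm : 0 ≤ mDens γ y := mDens_nonneg γ hy
    have hexp : Real.exp (γ * y) ≤ Real.exp |γ| := by
      apply Real.exp_le_exp.2
      have h1u : |y| ≤ 1 := abs_le.2 ⟨by linarith [hy.1], hy.2⟩
      have : |γ * y| ≤ |γ| := by
        rw [abs_mul]
        calc |γ| * |y| ≤ |γ| * 1 := by gcongr
          _ = |γ| := mul_one _
      linarith [(abs_le.1 this).2]
    have key : (K * (y * (1 - y))) ^ 2 * mDens γ y = K ^ 2 * ((y * (1 - y)) * Real.exp (γ * y)) := by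
      rw [mDens]
      field_simp
    have hd1 : y * (1 - y) ≤ 1 := by nlinarith [hy.1.le, hy.2]
    calc gFn γ x y ^ 2 * mDens γ y
        ≤ (K * (y * (1 - y))) ^ 2 * mDens γ y := by
          apply mul_le_mul_of_nonneg_right _ hm
          exact pow_le_pow_left₀ hg0 hgle 2
      _ = K ^ 2 * ((y * (1 - y)) * Real.exp (γ * y)) := key
      _ ≤ K ^ 2 * (1 * Real.exp |γ|) := by
          apply mul_le_mul_of_nonneg_left _ (sq_nonneg K)
          apply mul_le_mul hd1 hexp (Real.exp_pos _).le one_pos.le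
      _ = Bconst γ := by rw [Bconst]; ring

lemma mDens_measurable (γ : ℝ) : Measurable (mDens γ) :=
  (Real.measurable_exp.comp (measurable_const.mul measurable_id)).div
    (measurable_id.mul (measurable_const.sub measurable_id))

lemma g_cont (γ x : ℝ) : Continuous fun y => gFn γ x y := by
  apply Continuous.div_const
  exact (continuous_const.sub ((sFn_cont γ).comp (continuous_const.max continuous_id))).mul
    ((sFn_cont γ).comp (continuous_const.min continuous_id))

end TDAux2

namespace TDAux3
open TDAux TDAux2

lemma alpha_le (γ : ℝ) (f : ℝ → ℝ) (l : ℝ) (hmeasf : Measurable f)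
    (hnorm : (∫ y in (0:ℝ)..1, f y ^ 2 * mDens γ y) = 1)
    (heig : ∀ x ∈ Set.Icc (0:ℝ) 1, f x = l * ∫ y in (0:ℝ)..1, gFn γ x y * f y * mDens γ y)
    {x : ℝ} (hx : x ∈ Set.Icc (0:ℝ) 1) :
    |f x| ≤ Bconst γ ^ (1/2 : ℝ) * |l| := by
  set μ := volume.restrict (Set.Ioc (0:ℝ) 1) with hμ
  -- integrability of f² m'
  rw [intervalIntegral.integral_of_le zero_le_one] at hnorm
  have hI2 : Integrable (fun y => f y ^ 2 * mDens γ y) μ := by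
    by_contra h
    rw [MeasureTheory.integral_undef h] at hnorm
    exact one_ne_zero hnorm.symm
  have hI1 : Integrable (fun y => gFn γ x y ^ 2 * mDens γ y) μ := by
    apply Measure.integrableOn_of_bounded (measure_Ioc_lt_top).ne
      (((g_cont γ x).measurable.pow_const 2).mul (mDens_measurable γ)).aestronglyMeasurable
      (M := Bconst γ)
    filter_upwards [ae_restrict_mem measurableSet_Ioc] with y hy
    simp only [Pi.mul_apply]
    rw [Real.norm_eq_abs, abs_of_nonneg (mul_nonneg (sq_nonneg _) (mDens_nonneg γ hy))]
    exact g_sq_m_le γ hx hy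
  set F1 : ℝ → ℝ := fun y => |gFn γ x y| * Real.sqrt (mDens γ y) with hF1def
  set F2 : ℝ → ℝ := fun y => |f y| * Real.sqrt (mDens γ y) with hF2def
  have hF1m : AEStronglyMeasurable F1 μ :=
    ((g_cont γ x).measurable.abs.mul
      (Real.continuous_sqrt.measurable.comp (mDens_measurable γ))).aestronglyMeasurable
  have hF2m : AEStronglyMeasurable F2 μ :=
    (hmeasf.abs.mul
      (Real.continuous_sqrt.measurable.comp (mDens_measurable γ))).aestronglyMeasurable
  have hF1sq : ∀ y ∈ Set.Ioc (0:ℝ) 1, F1 y ^ 2 = gFn γ x y ^ 2 * mDens γ y := by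
    intro y hy
    simp only [hF1def, mul_pow, sq_abs, Real.sq_sqrt (mDens_nonneg γ hy)]
  have hF2sq : ∀ y ∈ Set.Ioc (0:ℝ) 1, F2 y ^ 2 = f y ^ 2 * mDens γ y := by
    intro y hy
    simp only [hF2def, mul_pow, sq_abs, Real.sq_sqrt (mDens_nonneg γ hy)]
  have hae1 : (fun y => F1 y ^ 2) =ᵐ[μ] fun y => gFn γ x y ^ 2 * mDens γ y :=
    (ae_restrict_iff' measurableSet_Ioc).2 (ae_of_all _ hF1sq)
  have hae2 : (fun y => F2 y ^ 2) =ᵐ[μ] fun y => f y ^ 2 * mDens γ y :=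
    (ae_restrict_iff' measurableSet_Ioc).2 (ae_of_all _ hF2sq)
  have hMem1 : MemLp F1 (ENNReal.ofReal 2) μ := by
    rw [show ENNReal.ofReal (2:ℝ) = 2 by norm_num]
    exact (memLp_two_iff_integrable_sq hF1m).2 (hI1.congr hae1.symm)
  have hMem2 : MemLp F2 (ENNReal.ofReal 2) μ := by
    rw [show ENNReal.ofReal (2:ℝ) = 2 by norm_num]
    exact (memLp_two_iff_integrable_sq hF2m).2 (hI2.congr hae2.symm)
  have hpq : Real.HolderConjugate 2 2 := Real.holderConjugate_iff.mpr ⟨one_lt_two, by norm_num⟩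
  have hH := MeasureTheory.integral_mul_le_Lp_mul_Lq_of_nonneg hpq
    (ae_of_all _ fun y => mul_nonneg (abs_nonneg _) (Real.sqrt_nonneg _))
    (ae_of_all _ fun y => mul_nonneg (abs_nonneg _) (Real.sqrt_nonneg _)) hMem1 hMem2
  simp only [Real.rpow_two] at hH
  -- evaluate the two L² factors
  have h4 : ∫ y, F2 y ^ 2 ∂μ = 1 := by rw [integral_congr_ae hae2]; exact hnorm
  have h5 : ∫ y, F1 y ^ 2 ∂μ ≤ Bconst γ := by
    rw [integral_congr_ae hae1]
    calc ∫ y in Set.Ioc (0:ℝ) 1, gFn γ x y ^ 2 * mDens γ y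
        ≤ ∫ _y in Set.Ioc (0:ℝ) 1, Bconst γ := by
          apply setIntegral_mono_on hI1 (integrableOn_const (measure_Ioc_lt_top).ne)
            measurableSet_Ioc
          intro y hy
          exact g_sq_m_le γ hx hy
      _ = Bconst γ := by simp
  have hfin : (∫ y, F1 y ^ 2 ∂μ) ^ (1/2:ℝ) * (∫ y, F2 y ^ 2 ∂μ) ^ (1/2:ℝ)
      ≤ Bconst γ ^ (1/2:ℝ) := by
    rw [h4, Real.one_rpow, mul_one]
    exact Real.rpow_le_rpow (integral_nonneg fun y => sq_nonneg _) h5 (by norm_num)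
  -- bound the eigen-integral
  have habs : |∫ y in (0:ℝ)..1, gFn γ x y * f y * mDens γ y| ≤ Bconst γ ^ (1/2:ℝ) := by
    rw [intervalIntegral.integral_of_le zero_le_one]
    have hprod : ∀ y ∈ Set.Ioc (0:ℝ) 1,
        |gFn γ x y * f y * mDens γ y| = F1 y * F2 y := by
      intro y hy
      have hm := mDens_nonneg γ hy
      have hsq : Real.sqrt (mDens γ y) * Real.sqrt (mDens γ y) = mDens γ y :=
        Real.mul_self_sqrt hm
      calc |gFn γ x y * f y * mDens γ y| = |gFn γ x y| * |f y| * mDens γ y := by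
            rw [abs_mul, abs_mul, abs_of_nonneg hm]
        _ = F1 y * F2 y := by rw [hF1def, hF2def, ← hsq]; ring
    calc |∫ y in Set.Ioc (0:ℝ) 1, gFn γ x y * f y * mDens γ y|
        ≤ ∫ y in Set.Ioc (0:ℝ) 1, |gFn γ x y * f y * mDens γ y| := by
          have h := MeasureTheory.norm_integral_le_integral_norm
            (μ := μ) (fun y => gFn γ x y * f y * mDens γ y)
          simp only [Real.norm_eq_abs] at h
          exact h
      _ = ∫ y, F1 y * F2 y ∂μ :=
          integral_congr_ae ((ae_restrict_iff' measurableSet_Ioc).2 (ae_of_all _ hprod))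
      _ ≤ Bconst γ ^ (1/2:ℝ) := hH.trans hfin
  rw [heig x hx, abs_mul, mul_comm]
  exact mul_le_mul_of_nonneg_right habs (abs_nonneg l)

end TDAux3

open Filter


/-- given normalized eigenfunction–eigenvalue pairs `(α_n, λ_n)` of the
Green operator with `Σ 1/λ_n² < ∞`, the series
`p(t,x,y) = Σ_n e^{−λ_n t} α_n(x) α_n(y)` converges absolutely and uniformly on
`{t ≥ a} × [0,1] × [0,1]` for every `a > 0`. -/
theorem transition_density_series_uniform_convergence
    (γ : ℝ) (α : ℕ → ℝ → ℝ) (lam : ℕ → ℝ)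
    (hmeas : ∀ n, Measurable (α n)) (hpos : ∀ n, 0 < lam n)
    (hnorm : ∀ n, (∫ y in (0 : ℝ)..1, α n y ^ 2 * mDens γ y) = 1)
    (heig : ∀ n, ∀ x ∈ Set.Icc (0 : ℝ) 1,
      α n x = lam n * ∫ y in (0 : ℝ)..1, gFn γ x y * α n y * mDens γ y)
    (hsum : Summable (fun n => 1 / lam n ^ 2)) :
    ∀ a > (0 : ℝ),
      (∀ t ≥ a, ∀ x ∈ Set.Icc (0 : ℝ) 1, ∀ y ∈ Set.Icc (0 : ℝ) 1,
        Summable (fun n => |Real.exp (-(lam n * t)) * α n x * α n y|))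
      ∧ TendstoUniformlyOn
          (fun (M : ℕ) (p : ℝ × ℝ × ℝ) =>
            ∑ n ∈ Finset.range M,
              Real.exp (-(lam n * p.1)) * α n p.2.1 * α n p.2.2)
          (fun p => ∑' n, Real.exp (-(lam n * p.1)) * α n p.2.1 * α n p.2.2)
          atTop
          {p : ℝ × ℝ × ℝ | a ≤ p.1 ∧ p.2.1 ∈ Set.Icc 0 1 ∧ p.2.2 ∈ Set.Icc 0 1} := by
  set C := TDAux2.Bconst γ ^ (1/2 : ℝ) with hCdef
  have hCnn : 0 ≤ C := Real.rpow_nonneg (TDAux2.Bconst_nonneg γ) _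
  have hα : ∀ n, ∀ x ∈ Set.Icc (0:ℝ) 1, |α n x| ≤ C * lam n := by
    intro n x hx
    have h := TDAux3.alpha_le γ (α n) (lam n) (hmeas n) (hnorm n) (heig n) hx
    rwa [abs_of_pos (hpos n)] at h
  intro a ha
  set u : ℕ → ℝ := fun n => C ^ 2 * (24 / a ^ 4) * (1 / lam n ^ 2) with hu_def
  have hu : Summable u := hsum.mul_left _
  have hbound : ∀ (n : ℕ) (p : ℝ × ℝ × ℝ),
      p ∈ {p : ℝ × ℝ × ℝ | a ≤ p.1 ∧ p.2.1 ∈ Set.Icc 0 1 ∧ p.2.2 ∈ Set.Icc 0 1} →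
      ‖Real.exp (-(lam n * p.1)) * α n p.2.1 * α n p.2.2‖ ≤ u n := by
    rintro n ⟨t, x, y⟩ ⟨ht, hx, hy⟩
    have hl := hpos n
    have hea : Real.exp (-(lam n * a)) * (lam n * a) ^ 4 ≤ 24 := by
      have h1 : (lam n * a) ^ 4 / 24 ≤ Real.exp (lam n * a) := by
        have h := Real.pow_div_factorial_le_exp (x := lam n * a) (mul_nonneg hl.le ha.le) 4
        norm_num [Nat.factorial] at h
        exact h
      have hinv : Real.exp (-(lam n * a)) * Real.exp (lam n * a) = 1 := by
        rw [← Real.exp_add]; simp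
      nlinarith [Real.exp_pos (-(lam n * a)), Real.exp_pos (lam n * a)]
    have h2 : Real.exp (-(lam n * a)) * lam n ^ 2 ≤ 24 / (a ^ 4 * lam n ^ 2) := by
      rw [le_div_iff₀ (by positivity)]
      calc Real.exp (-(lam n * a)) * lam n ^ 2 * (a ^ 4 * lam n ^ 2)
          = Real.exp (-(lam n * a)) * (lam n * a) ^ 4 := by ring
        _ ≤ 24 := hea
    have hexpmono : Real.exp (-(lam n * t)) ≤ Real.exp (-(lam n * a)) := by
      apply Real.exp_le_exp.2
      have : lam n * a ≤ lam n * t := mul_le_mul_of_nonneg_left ht hl.le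
      linarith
    calc ‖Real.exp (-(lam n * t)) * α n x * α n y‖
        = Real.exp (-(lam n * t)) * |α n x| * |α n y| := by
          rw [Real.norm_eq_abs, abs_mul, abs_mul, abs_of_pos (Real.exp_pos _)]
      _ ≤ Real.exp (-(lam n * a)) * (C * lam n) * (C * lam n) := by
          apply mul_le_mul _ (hα n y hy) (abs_nonneg _)
            (mul_nonneg (Real.exp_pos _).le (mul_nonneg hCnn hl.le))
          exact mul_le_mul hexpmono (hα n x hx) (abs_nonneg _) (Real.exp_pos _).le
      _ = C ^ 2 * (Real.exp (-(lam n * a)) * lam n ^ 2) := by ring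
      _ ≤ C ^ 2 * (24 / (a ^ 4 * lam n ^ 2)) :=
          mul_le_mul_of_nonneg_left h2 (sq_nonneg C)
      _ = u n := by rw [hu_def]; ring
  constructor
  · intro t ht x hx y hy
    apply Summable.of_nonneg_of_le (fun n => abs_nonneg _) (fun n => ?_) hu
    have h := hbound n (t, x, y) ⟨ht, hx, hy⟩
    simp only [Real.norm_eq_abs] at h
    exact h
  · exact tendstoUniformlyOn_tsum_nat hu hbound
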